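/- Uniform doubling property of the collapsing Riemannian metrics on the Heisenberg group: there exist constants C, R > 0, independent of ε, such that for every ε ∈ (0,1], every x ∈ ℝ³ and every 0 < r < R, the Lebesgue measure of the metric balls satisfies vol(B_ε(x,2r)) ≤ C · vol(B_ε(x,r)). -/

import Mathlib

open Real Set MeasureTheory

noncomputable section

/-- Points of the Heisenberg group `ℍ¹ = ℝ³` (Haar measure = Lebesgue measure). -/
abbrev Pt := Fin 3 → ℝ

/-- The σ_ε-norm of the velocity vector `v` at the point `x`: writing
`v = aX₁(x) + bX₂(x) + cX₃(x)` with `X₁(x) = (1,0,−x₂)`, `X₂(x) = (0,1,x₁)`,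
`X₃(x) = (0,0,2)` (so `a = v₀`, `b = v₁`, `c = (v₂ + v₀x₂ − v₁x₁)/2`), its square
is `a² + b² + c²/ε²`; this makes `X₁, X₂, εX₃` orthonormal. -/
def sigmaNorm (ε : ℝ) (x v : Pt) : ℝ :=
  Real.sqrt ((v 0) ^ 2 + (v 1) ^ 2 + ((v 2 + v 0 * x 1 - v 1 * x 0) / 2) ^ 2 / ε ^ 2)

/-- The Riemannian distance `d_ε`: the infimum of σ_ε-lengths of curves joining
`x` to `y`. -/
def dE (ε : ℝ) (x y : Pt) : ℝ :=
  sInf {L : ℝ | ∃ γ : ℝ → Pt, ∃ g : ℝ → Pt,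
    (∀ t ∈ Icc (0 : ℝ) 1, HasDerivAt γ (g t) t) ∧ ContinuousOn g (Icc 0 1) ∧
    γ 0 = x ∧ γ 1 = y ∧ L = ∫ t in (0 : ℝ)..1, sigmaNorm ε (γ t) (g t)}

/-- The metric ball `B_ε(x,r)`. -/
def ballE (ε : ℝ) (x : Pt) (r : ℝ) : Set Pt := {y | dE ε x y < r}

namespace H18

/-- The vertical coordinate of `x⁻¹ · y` (twice the `c`-coordinate budget). -/
def wc (x y : Pt) : ℝ := y 2 - x 2 - x 0 * (y 1 - x 1) + x 1 * (y 0 - x 0)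

def CS (ε : ℝ) (x y : Pt) : Set ℝ := {L : ℝ | ∃ γ : ℝ → Pt, ∃ g : ℝ → Pt,
    (∀ t ∈ Icc (0 : ℝ) 1, HasDerivAt γ (g t) t) ∧ ContinuousOn g (Icc 0 1) ∧
    γ 0 = x ∧ γ 1 = y ∧ L = ∫ t in (0 : ℝ)..1, sigmaNorm ε (γ t) (g t)}

lemma dE_eq (ε : ℝ) (x y : Pt) : dE ε x y = sInf (CS ε x y) := rfl

lemma sigmaNorm_nonneg (ε : ℝ) (x v : Pt) : 0 ≤ sigmaNorm ε x v := Real.sqrt_nonneg _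

lemma abs0_le (ε : ℝ) (x v : Pt) : |v 0| ≤ sigmaNorm ε x v := by
  rw [← Real.sqrt_sq_eq_abs]
  apply Real.sqrt_le_sqrt
  have h1 : (0:ℝ) ≤ (v 1)^2 := sq_nonneg _
  have h2 : (0:ℝ) ≤ ((v 2 + v 0 * x 1 - v 1 * x 0) / 2) ^ 2 / ε ^ 2 := by positivity
  linarith

lemma abs1_le (ε : ℝ) (x v : Pt) : |v 1| ≤ sigmaNorm ε x v := by
  rw [← Real.sqrt_sq_eq_abs]
  apply Real.sqrt_le_sqrt
  have h1 : (0:ℝ) ≤ (v 0)^2 := sq_nonneg _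
  have h2 : (0:ℝ) ≤ ((v 2 + v 0 * x 1 - v 1 * x 0) / 2) ^ 2 / ε ^ 2 := by positivity
  linarith

lemma absc_le {ε : ℝ} (hε : 0 < ε) (x v : Pt) :
    |v 2 + v 0 * x 1 - v 1 * x 0| ≤ 2 * ε * sigmaNorm ε x v := by
  set a := v 2 + v 0 * x 1 - v 1 * x 0 with ha
  have key : (a / (2*ε))^2 ≤ (v 0) ^ 2 + (v 1) ^ 2 + (a / 2) ^ 2 / ε ^ 2 := by
    have h1 : (a / (2*ε))^2 = (a/2)^2/ε^2 := by
      rw [div_pow a, div_pow a, mul_pow, div_div]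
    nlinarith [sq_nonneg (v 0), sq_nonneg (v 1)]
  have h := Real.sqrt_le_sqrt key
  rw [Real.sqrt_sq_eq_abs, abs_div, abs_of_pos (by linarith : (0:ℝ) < 2*ε)] at h
  have h2 : |a| ≤ sigmaNorm ε x v * (2*ε) := (div_le_iff₀ (by linarith)).mp h
  linarith

lemma sigmaNorm_smul {s : ℝ} (hs : 0 ≤ s) (ε : ℝ) (x v : Pt) :
    sigmaNorm ε x (s • v) = s * sigmaNorm ε x v := by
  unfold sigmaNorm
  have h : ((s • v) 0) ^ 2 + ((s • v) 1) ^ 2 +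
      (((s • v) 2 + (s • v) 0 * x 1 - (s • v) 1 * x 0) / 2) ^ 2 / ε ^ 2
      = s^2 * ((v 0) ^ 2 + (v 1) ^ 2 + ((v 2 + v 0 * x 1 - v 1 * x 0) / 2) ^ 2 / ε ^ 2) := by
    simp only [Pi.smul_apply, smul_eq_mul]
    ring
  rw [h, Real.sqrt_mul (sq_nonneg s), Real.sqrt_sq hs]

lemma CS_nonneg {ε : ℝ} {x y : Pt} {L : ℝ} (hL : L ∈ CS ε x y) : 0 ≤ L := by
  obtain ⟨γ, g, _, _, _, _, rfl⟩ := hL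
  exact intervalIntegral.integral_nonneg zero_le_one (fun u _ => sigmaNorm_nonneg _ _ _)

lemma CS_bddBelow (ε : ℝ) (x y : Pt) : BddBelow (CS ε x y) :=
  ⟨0, fun _ hL => CS_nonneg hL⟩

lemma straight_mem (ε : ℝ) (x y : Pt) :
    Real.sqrt ((y 0 - x 0) ^ 2 + (y 1 - x 1) ^ 2 + (wc x y / 2) ^ 2 / ε ^ 2) ∈ CS ε x y := by
  classical
  set u : Pt := fun i => y i - x i with hu
  refine ⟨fun t => fun i => x i + t * u i, fun _ => u, ?_, continuousOn_const, ?_, ?_, ?_⟩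
  · intro t _
    rw [hasDerivAt_pi]
    intro i
    simpa using ((hasDerivAt_id t).mul_const (u i)).const_add (x i)
  · funext i; simp [hu]
  · funext i; simp [hu]
  · have hpt : ∀ t : ℝ, sigmaNorm ε (fun i => x i + t * u i) u
        = Real.sqrt ((y 0 - x 0) ^ 2 + (y 1 - x 1) ^ 2 + (wc x y / 2) ^ 2 / ε ^ 2) := by
      intro t
      unfold sigmaNorm wc
      congr 1
      simp only [hu]
      ring_nf
    rw [intervalIntegral.integral_congr (g := fun _ =>
      Real.sqrt ((y 0 - x 0) ^ 2 + (y 1 - x 1) ^ 2 + (wc x y / 2) ^ 2 / ε ^ 2))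
      (fun t _ => hpt t)]
    simp

lemma CS_nonempty (ε : ℝ) (x y : Pt) : (CS ε x y).Nonempty := ⟨_, straight_mem ε x y⟩

lemma sqrt3_le (a b c : ℝ) : Real.sqrt (a^2 + b^2 + c^2) ≤ |a| + |b| + |c| := by
  rw [show |a| + |b| + |c| = Real.sqrt ((|a| + |b| + |c|)^2) from
    (Real.sqrt_sq (by positivity)).symm]
  apply Real.sqrt_le_sqrt
  nlinarith [abs_nonneg a, abs_nonneg b, abs_nonneg c, sq_abs a, sq_abs b, sq_abs c,
    mul_nonneg (abs_nonneg a) (abs_nonneg b), mul_nonneg (abs_nonneg a) (abs_nonneg c),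
    mul_nonneg (abs_nonneg b) (abs_nonneg c)]

lemma dE_le_straight {ε : ℝ} (hε : 0 < ε) (x y : Pt) :
    dE ε x y ≤ |y 0 - x 0| + |y 1 - x 1| + |wc x y| / (2 * ε) := by
  rw [dE_eq]
  refine le_trans (csInf_le (CS_bddBelow ε x y) (straight_mem ε x y)) ?_
  have h : (wc x y / 2) ^ 2 / ε ^ 2 = (wc x y / (2*ε))^2 := by
    rw [div_pow (wc x y), div_pow (wc x y), mul_pow, div_div]
  rw [h]
  refine le_trans (sqrt3_le _ _ _) ?_
  rw [abs_div, abs_of_pos (by linarith : (0:ℝ) < 2*ε)]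


section LowerBound

variable {ε : ℝ} {x y : Pt} {L : ℝ}

lemma curve_bounds (hε : 0 < ε) (hL : L ∈ CS ε x y) :
    |y 0 - x 0| ≤ L ∧ |y 1 - x 1| ≤ L ∧ |wc x y| ≤ 2 * ε * L + 2 * L ^ 2 := by
  obtain ⟨γ, g, hderiv, hgc, h0, h1, rfl⟩ := hL
  set F : ℝ → ℝ := fun t => sigmaNorm ε (γ t) (g t) with hF
  set L : ℝ := ∫ t in (0:ℝ)..1, F t with hLdef
  have hγc : ContinuousOn γ (Icc 0 1) :=
    fun t ht => (hderiv t ht).continuousAt.continuousWithinAt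
  have hui : uIcc (0:ℝ) 1 = Icc 0 1 := uIcc_of_le zero_le_one
  have hgci : ∀ i : Fin 3, ContinuousOn (fun t => g t i) (Icc 0 1) :=
    fun i => (continuous_apply i).comp_continuousOn hgc
  have hγci : ∀ i : Fin 3, ContinuousOn (fun t => γ t i) (Icc 0 1) :=
    fun i => (continuous_apply i).comp_continuousOn hγc
  have hFc : ContinuousOn F (Icc 0 1) := by
    unfold F
    unfold sigmaNorm
    apply Real.continuous_sqrt.comp_continuousOn
    exact (((hgci 0).pow 2).add ((hgci 1).pow 2)).add
      ((((((hgci 2).add ((hgci 0).mul (hγci 1))).sub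
        ((hgci 1).mul (hγci 0))).div_const 2).pow 2).div_const _)
  have hFint : IntervalIntegrable F volume 0 1 := by
    apply ContinuousOn.intervalIntegrable; rwa [hui]
  have hFnn : ∀ t ∈ Icc (0:ℝ) 1, 0 ≤ F t := fun t _ => sigmaNorm_nonneg _ _ _
  have hLnn : 0 ≤ L := intervalIntegral.integral_nonneg zero_le_one hFnn
  have hgint : ∀ i : Fin 3, IntervalIntegrable (fun t => g t i) volume 0 1 := by
    intro i; apply ContinuousOn.intervalIntegrable; rw [hui]; exact hgci i
  have hderivi : ∀ i : Fin 3, ∀ t ∈ Icc (0:ℝ) 1,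
      HasDerivAt (fun s => γ s i) (g t i) t :=
    fun i t ht => hasDerivAt_pi.mp (hderiv t ht) i
  have hFTC : ∀ i : Fin 3, ∫ t in (0:ℝ)..1, g t i = γ 1 i - γ 0 i := by
    intro i
    exact intervalIntegral.integral_eq_sub_of_hasDerivAt (f := fun s => γ s i)
      (f' := fun t => g t i) (fun t ht => hderivi i t (hui ▸ ht)) (hgint i)
  -- componentwise bound |∫ g i| ≤ L for i = 0, 1
  have hcomp : ∀ i : Fin 3, (∀ t, |g t i| ≤ F t) → |γ 1 i - γ 0 i| ≤ L := by
    intro i hpt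
    rw [← hFTC i]
    refine le_trans (intervalIntegral.abs_integral_le_integral_abs zero_le_one) ?_
    exact intervalIntegral.integral_mono_on zero_le_one (hgint i).abs hFint
      (fun t _ => hpt t)
  have hb0 : |y 0 - x 0| ≤ L := by
    rw [← h0, ← h1]; exact hcomp 0 (fun t => abs0_le ε (γ t) (g t))
  have hb1 : |y 1 - x 1| ≤ L := by
    rw [← h0, ← h1]; exact hcomp 1 (fun t => abs1_le ε (γ t) (g t))
  refine ⟨hb0, hb1, ?_⟩
  -- excursion bound
  have hexc : ∀ i : Fin 3, (∀ t, |g t i| ≤ F t) → ∀ t ∈ Icc (0:ℝ) 1,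
      |γ t i - γ 0 i| ≤ L := by
    intro i hpt t ht
    have hsub : uIcc 0 t ⊆ uIcc (0:ℝ) 1 := by
      rw [hui, uIcc_of_le ht.1]; exact Icc_subset_Icc le_rfl ht.2
    have hftc : ∫ s in (0:ℝ)..t, g s i = γ t i - γ 0 i := by
      refine intervalIntegral.integral_eq_sub_of_hasDerivAt (f := fun s => γ s i)
        (f' := fun s => g s i) (fun u hu => hderivi i u ?_) ((hgint i).mono_set hsub)
      have := hsub hu
      rwa [hui] at this
    rw [← hftc]
    refine le_trans (intervalIntegral.abs_integral_le_integral_abs ht.1) ?_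
    have h1' : ∫ s in (0:ℝ)..t, |g s i| ≤ ∫ s in (0:ℝ)..t, F s := by
      apply intervalIntegral.integral_mono_on ht.1
        (((hgint i).mono_set hsub).abs) (hFint.mono_set hsub)
      intro u hu; exact hpt u
    refine le_trans h1' ?_
    apply intervalIntegral.integral_mono_interval le_rfl ht.1 ht.2 ?_ hFint
    filter_upwards [ae_restrict_mem measurableSet_Ioc] with u hu
    exact sigmaNorm_nonneg _ _ _
  have hexc0 := hexc 0 (fun t => abs0_le ε (γ t) (g t))
  have hexc1 := hexc 1 (fun t => abs1_le ε (γ t) (g t))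
  -- vertical bound
  set h : ℝ → ℝ := fun t => g t 2 - x 0 * g t 1 + x 1 * g t 0 with hh
  have hhc : ContinuousOn h (Icc 0 1) :=
    ((hgci 2).sub (continuousOn_const.mul (hgci 1))).add
      (continuousOn_const.mul (hgci 0))
  have hhint : IntervalIntegrable h volume 0 1 := by
    apply ContinuousOn.intervalIntegrable; rwa [hui]
  have hwc : wc x y = ∫ t in (0:ℝ)..1, h t := by
    unfold h
    rw [intervalIntegral.integral_add, intervalIntegral.integral_sub,
      intervalIntegral.integral_const_mul, intervalIntegral.integral_const_mul,
      hFTC 0, hFTC 1, hFTC 2, h0, h1]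
    · unfold wc; ring
    · exact hgint 2
    · exact (hgint 1).const_mul _
    · exact (hgint 2).sub ((hgint 1).const_mul _)
    · exact (hgint 0).const_mul _
  have hptb : ∀ t ∈ Icc (0:ℝ) 1, |h t| ≤ (2*ε + 2*L) * F t := by
    intro t ht
    have e1 : h t = (g t 2 + g t 0 * γ t 1 - g t 1 * γ t 0)
        - g t 0 * (γ t 1 - x 1) + g t 1 * (γ t 0 - x 0) := by
      unfold h; ring
    have b1 : |g t 2 + g t 0 * γ t 1 - g t 1 * γ t 0| ≤ 2 * ε * F t :=
      absc_le hε (γ t) (g t)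
    have b2 : |g t 0 * (γ t 1 - x 1)| ≤ F t * L := by
      rw [abs_mul]
      have := hexc1 t ht
      rw [h0] at this
      exact mul_le_mul (abs0_le ε (γ t) (g t)) this (abs_nonneg _)
        (sigmaNorm_nonneg _ _ _)
    have b3 : |g t 1 * (γ t 0 - x 0)| ≤ F t * L := by
      rw [abs_mul]
      have := hexc0 t ht
      rw [h0] at this
      exact mul_le_mul (abs1_le ε (γ t) (g t)) this (abs_nonneg _)
        (sigmaNorm_nonneg _ _ _)
    calc |h t| ≤ |g t 2 + g t 0 * γ t 1 - g t 1 * γ t 0|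
          + |g t 0 * (γ t 1 - x 1)| + |g t 1 * (γ t 0 - x 0)| := by
            rw [e1]; exact (abs_add_le _ _).trans (add_le_add_left (abs_sub _ _) _)
      _ ≤ 2 * ε * F t + F t * L + F t * L := by linarith
      _ = (2*ε + 2*L) * F t := by ring
  have hwb : |wc x y| ≤ (2*ε + 2*L) * L := by
    rw [hwc]
    refine le_trans (intervalIntegral.abs_integral_le_integral_abs zero_le_one) ?_
    have := intervalIntegral.integral_mono_on zero_le_one hhint.abs
      (hFint.const_mul (2*ε + 2*L)) hptb
    refine le_trans this ?_
    rw [intervalIntegral.integral_const_mul]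
  calc |wc x y| ≤ (2*ε + 2*L) * L := hwb
    _ = 2 * ε * L + 2 * L^2 := by ring

end LowerBound


section Loop

/-! ### The two-piece curve: straight segment then horizontal circle -/

def uvec (x y : Pt) : Pt :=
  ![y 0 - x 0, y 1 - x 1, x 0 * (y 1 - x 1) - x 1 * (y 0 - x 0)]

def zpt (x y : Pt) : Pt := fun i => x i + uvec x y i

def tau (t : ℝ) : ℝ := (1 - Real.cos (2*π*t))/2
def taud (t : ℝ) : ℝ := π * Real.sin (2*π*t)
def thf (t : ℝ) : ℝ := π * (1 - Real.cos (2*π*(t - 1/2)))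
def thd (t : ℝ) : ℝ := 2*π^2 * Real.sin (2*π*(t - 1/2))

def P1 (x y : Pt) (t : ℝ) : Pt := fun i => x i + tau t * uvec x y i
def gc1 (x y : Pt) (t : ℝ) : Pt := taud t • uvec x y

def Dv (x y : Pt) (s η θv : ℝ) : Pt :=
  ![s * Real.cos θv, η * s * Real.sin θv,
    -(s * zpt x y 1 * Real.cos θv) + η * s * zpt x y 0 * Real.sin θv
      + η * s^2 * (1 - Real.cos θv)]

def P2 (x y : Pt) (s η : ℝ) (t : ℝ) : Pt :=
  ![zpt x y 0 + s * Real.sin (thf t),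
    zpt x y 1 + η * s * (1 - Real.cos (thf t)),
    zpt x y 2 + (-(s * zpt x y 1 * Real.sin (thf t))
      - η * s * zpt x y 0 * Real.cos (thf t) + η * s * zpt x y 0
      + η * s^2 * (thf t - Real.sin (thf t)))]

def gc2 (x y : Pt) (s η : ℝ) (t : ℝ) : Pt := thd t • Dv x y s η (thf t)

def gam (x y : Pt) (s η : ℝ) (t : ℝ) : Pt :=
  if t ≤ 1/2 then P1 x y t else P2 x y s η t

def gvel (x y : Pt) (s η : ℝ) (t : ℝ) : Pt :=
  if t ≤ 1/2 then gc1 x y t else gc2 x y s η t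

lemma tau_zero : tau 0 = 0 := by simp [tau]

lemma tau_half : tau (1/2) = 1 := by
  unfold tau
  rw [show 2*π*(1/2:ℝ) = π by ring, Real.cos_pi]
  norm_num

lemma taud_half : taud (1/2) = 0 := by
  unfold taud
  rw [show 2*π*(1/2:ℝ) = π by ring, Real.sin_pi, mul_zero]

lemma thf_half : thf (1/2) = 0 := by simp [thf]

lemma thf_one : thf 1 = 2*π := by
  unfold thf
  rw [show 2*π*((1:ℝ) - 1/2) = π by ring, Real.cos_pi]
  ring

lemma thd_half : thd (1/2) = 0 := by simp [thd]

lemma gc1_half (x y : Pt) : gc1 x y (1/2) = 0 := by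
  unfold gc1
  rw [taud_half, zero_smul]

lemma gc2_half (x y : Pt) (s η : ℝ) : gc2 x y s η (1/2) = 0 := by
  unfold gc2
  rw [thd_half, zero_smul]

lemma P_half (x y : Pt) (s η : ℝ) : P1 x y (1/2) = P2 x y s η (1/2) := by
  funext i
  simp only [P1, P2]
  rw [tau_half, thf_half]
  fin_cases i <;> simp [zpt] <;> ring

lemma hasDerivAt_tau (t : ℝ) : HasDerivAt tau (taud t) t := by
  have h1 : HasDerivAt (fun t : ℝ => 2*π*t) (2*π) t := by
    simpa using (hasDerivAt_id t).const_mul (2*π)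
  have h2 := (Real.hasDerivAt_cos (2*π*t)).comp t h1
  have h3 := (h2.const_sub 1).div_const 2
  have he : taud t = -(-Real.sin (2*π*t) * (2*π)) / 2 := by
    unfold taud; ring
  rw [he]
  exact h3

lemma hasDerivAt_thf (t : ℝ) : HasDerivAt thf (thd t) t := by
  have h1 : HasDerivAt (fun t : ℝ => 2*π*(t - 1/2)) (2*π) t := by
    exact (((hasDerivAt_id t).sub_const (1/2)).const_mul (2*π)).congr_deriv (by ring)
  have h2 := (Real.hasDerivAt_cos (2*π*(t - 1/2))).comp t h1
  have h3 := (h2.const_sub 1).const_mul π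
  have he : thd t = π * -(-Real.sin (2*π*(t - 1/2)) * (2*π)) := by
    unfold thd; ring
  rw [he]
  exact h3

lemma hasDerivAt_P1 (x y : Pt) (t : ℝ) : HasDerivAt (P1 x y) (gc1 x y t) t := by
  rw [hasDerivAt_pi]
  intro i
  have h := ((hasDerivAt_tau t).mul_const (uvec x y i)).const_add (x i)
  have he : gc1 x y t i = taud t * uvec x y i := rfl
  rw [he]
  exact h

lemma hasDerivAt_P2 (x y : Pt) (s η : ℝ) (t : ℝ) :
    HasDerivAt (P2 x y s η) (gc2 x y s η t) t := by
  rw [hasDerivAt_pi]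
  have hθ := hasDerivAt_thf t
  intro i
  fin_cases i
  · have h := (((Real.hasDerivAt_sin (thf t)).comp t hθ).const_mul s).const_add
      (zpt x y 0)
    have he : gc2 x y s η t 0 = s * (Real.cos (thf t) * thd t) := by
      simp [gc2, Dv]; ring
    rw [show ((⟨0, by norm_num⟩ : Fin 3)) = (0 : Fin 3) from rfl]
    simp only [P2, Matrix.cons_val_zero, Fin.isValue]
    rw [he]
    exact h
  · have h := ((((Real.hasDerivAt_cos (thf t)).comp t hθ).const_sub 1).const_mul
      (η * s)).const_add (zpt x y 1)
    have he : gc2 x y s η t 1 = η * s * -(-Real.sin (thf t) * thd t) := by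
      simp [gc2, Dv]; ring
    rw [show ((⟨1, by norm_num⟩ : Fin 3)) = (1 : Fin 3) from rfl]
    simp only [P2, Matrix.cons_val_one, Matrix.head_cons, Fin.isValue]
    rw [he]
    exact h
  · -- third component
    have hsin := (Real.hasDerivAt_sin (thf t)).comp t hθ
    have hcos := (Real.hasDerivAt_cos (thf t)).comp t hθ
    have h := ((((hsin.const_mul (s * zpt x y 1)).neg.sub
        (hcos.const_mul (η * s * zpt x y 0))).add_const (η * s * zpt x y 0)).add
        ((hθ.sub hsin).const_mul (η * s^2))).const_add (zpt x y 2)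
    have he : gc2 x y s η t 2 =
        -((s * zpt x y 1) * (Real.cos (thf t) * thd t))
        - (η * s * zpt x y 0) * (-Real.sin (thf t) * thd t)
        + (η * s^2) * (thd t - Real.cos (thf t) * thd t) := by
      simp [gc2, Dv]; ring
    rw [show ((⟨2, by norm_num⟩ : Fin 3)) = (2 : Fin 3) from rfl]
    simp only [P2, Matrix.cons_val_two, Matrix.tail_cons, Matrix.head_cons, Fin.isValue]
    rw [he]
    exact h

lemma gam_hasDeriv (x y : Pt) (s η : ℝ) (t : ℝ) :
    HasDerivAt (gam x y s η) (gvel x y s η t) t := by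
  rcases lt_trichotomy t (1/2 : ℝ) with ht | ht | ht
  · have hev : gam x y s η =ᶠ[nhds t] P1 x y := by
      filter_upwards [Iio_mem_nhds ht] with u hu
      have h' : u ≤ 1/2 := le_of_lt (mem_Iio.mp hu)
      simp only [gam, if_pos h']
    have : gvel x y s η t = gc1 x y t := if_pos (le_of_lt ht)
    rw [this]
    exact (hasDerivAt_P1 x y t).congr_of_eventuallyEq hev
  · subst ht
    have h1 : HasDerivWithinAt (gam x y s η) 0 (Iic (1/2)) (1/2) := by
      have hP := (hasDerivAt_P1 x y (1/2)).hasDerivWithinAt (s := Iic (1/2:ℝ))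
      rw [gc1_half] at hP
      exact hP.congr (fun u hu => if_pos hu) (if_pos le_rfl)
    have h2 : HasDerivWithinAt (gam x y s η) 0 (Ici (1/2)) (1/2) := by
      have hP := (hasDerivAt_P2 x y s η (1/2)).hasDerivWithinAt (s := Ici (1/2:ℝ))
      rw [gc2_half] at hP
      refine hP.congr (fun u hu => ?_) ?_
      · rcases eq_or_lt_of_le (mem_Ici.mp hu : (1/2:ℝ) ≤ u) with h | h
        · rw [gam, ← h, if_pos le_rfl, P_half]
        · rw [gam, if_neg (not_le.mpr h)]
      · rw [gam, if_pos le_rfl, P_half]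
    have hu := h1.union h2
    rw [Iic_union_Ici] at hu
    have : gvel x y s η (1/2) = 0 := by
      rw [gvel, if_pos le_rfl, gc1_half]
    rw [this]
    exact hasDerivWithinAt_univ.mp hu
  · have hev : gam x y s η =ᶠ[nhds t] P2 x y s η := by
      filter_upwards [Ioi_mem_nhds ht] with u hu
      have h' : ¬ u ≤ 1/2 := not_le.mpr (mem_Ioi.mp hu)
      simp only [gam, if_neg h']
    have : gvel x y s η t = gc2 x y s η t := if_neg (not_le.mpr ht)
    rw [this]
    exact (hasDerivAt_P2 x y s η t).congr_of_eventuallyEq hev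

lemma cont_taud : Continuous taud := by
  unfold taud; fun_prop

lemma cont_thd : Continuous thd := by
  unfold thd; fun_prop

lemma cont_thf : Continuous thf := by
  unfold thf; fun_prop

lemma cont_gc1 (x y : Pt) : Continuous (gc1 x y) :=
  cont_taud.smul continuous_const

lemma cont_gc2 (x y : Pt) (s η : ℝ) : Continuous (gc2 x y s η) := by
  apply cont_thd.smul
  apply continuous_pi
  intro i
  fin_cases i
  · rw [show ((⟨0, by norm_num⟩ : Fin 3)) = (0 : Fin 3) from rfl]
    simp only [Dv, thf, Matrix.cons_val_zero]
    fun_prop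
  · rw [show ((⟨1, by norm_num⟩ : Fin 3)) = (1 : Fin 3) from rfl]
    simp only [Dv, thf, Matrix.cons_val_one, Matrix.head_cons]
    fun_prop
  · rw [show ((⟨2, by norm_num⟩ : Fin 3)) = (2 : Fin 3) from rfl]
    simp only [Dv, thf, Matrix.cons_val_two, Matrix.tail_cons, Matrix.head_cons]
    fun_prop

lemma cont_gvel (x y : Pt) (s η : ℝ) : Continuous (gvel x y s η) := by
  unfold gvel
  apply Continuous.if_le (cont_gc1 x y) (cont_gc2 x y s η) continuous_id
    continuous_const
  intro t ht
  have h' : t = 1/2 := ht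
  subst h'
  rw [gc1_half, gc2_half]

lemma gam_zero (x y : Pt) (s η : ℝ) : gam x y s η 0 = x := by
  rw [gam, if_pos (by norm_num : (0:ℝ) ≤ 1/2)]
  funext i
  rw [P1, tau_zero]
  ring

lemma gam_one (x y : Pt) (s η : ℝ) (hw : η * s^2 * (2*π) = wc x y) :
    gam x y s η 1 = y := by
  rw [gam, if_neg (by norm_num)]
  funext i
  have h2π := thf_one
  fin_cases i
  · rw [show ((⟨0, by norm_num⟩ : Fin 3)) = (0 : Fin 3) from rfl]
    simp only [P2, h2π, Real.sin_two_pi, Real.cos_two_pi, Matrix.cons_val_zero,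
      zpt, uvec, Matrix.cons_val_one, Matrix.head_cons, Matrix.cons_val_two,
      Matrix.tail_cons]
    ring
  · rw [show ((⟨1, by norm_num⟩ : Fin 3)) = (1 : Fin 3) from rfl]
    simp only [P2, h2π, Real.sin_two_pi, Real.cos_two_pi, Matrix.cons_val_zero,
      zpt, uvec, Matrix.cons_val_one, Matrix.head_cons, Matrix.cons_val_two,
      Matrix.tail_cons]
    ring
  · rw [show ((⟨2, by norm_num⟩ : Fin 3)) = (2 : Fin 3) from rfl]
    simp only [P2, h2π, Real.sin_two_pi, Real.cos_two_pi, Matrix.cons_val_zero,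
      zpt, uvec, Matrix.cons_val_one, Matrix.head_cons, Matrix.cons_val_two,
      Matrix.tail_cons]
    unfold wc at hw
    linear_combination hw

lemma taud_nonneg {t : ℝ} (h0 : 0 ≤ t) (h1 : t ≤ 1/2) : 0 ≤ taud t := by
  have hπ := Real.pi_pos
  apply mul_nonneg (le_of_lt hπ)
  apply Real.sin_nonneg_of_nonneg_of_le_pi
  · positivity
  · nlinarith

lemma thd_nonneg {t : ℝ} (h0 : 1/2 ≤ t) (h1 : t ≤ 1) : 0 ≤ thd t := by
  have hπ := Real.pi_pos
  apply mul_nonneg (by positivity)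
  apply Real.sin_nonneg_of_nonneg_of_le_pi
  · nlinarith
  · nlinarith

lemma sn_P1 (ε : ℝ) (x y : Pt) {t : ℝ} (h0 : 0 ≤ t) (h1 : t ≤ 1/2) :
    sigmaNorm ε (P1 x y t) (gc1 x y t) =
      Real.sqrt ((y 0 - x 0)^2 + (y 1 - x 1)^2) * taud t := by
  rw [gc1, sigmaNorm_smul (taud_nonneg h0 h1), mul_comm]
  congr 1
  unfold sigmaNorm
  have hc : uvec x y 2 + uvec x y 0 * P1 x y t 1 - uvec x y 1 * P1 x y t 0 = 0 := by
    simp [uvec, P1]; ring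
  rw [hc]
  have h0' : ((0:ℝ)/2)^2/ε^2 = 0 := by norm_num
  rw [h0']
  congr 1
  simp [uvec]

lemma sn_P2 (ε : ℝ) (x y : Pt) {s η : ℝ} (hs : 0 ≤ s) (hη : η^2 = 1)
    {t : ℝ} (h0 : 1/2 ≤ t) (h1 : t ≤ 1) :
    sigmaNorm ε (P2 x y s η t) (gc2 x y s η t) = s * thd t := by
  rw [gc2, sigmaNorm_smul (thd_nonneg h0 h1), mul_comm]
  congr 1
  unfold sigmaNorm
  have pyth := Real.sin_sq_add_cos_sq (thf t)
  have hc : Dv x y s η (thf t) 2 + Dv x y s η (thf t) 0 * P2 x y s η t 1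
      - Dv x y s η (thf t) 1 * P2 x y s η t 0 = 0 := by
    simp only [Dv, P2, Matrix.cons_val_zero, Matrix.cons_val_one, Matrix.head_cons,
      Matrix.cons_val_two, Matrix.tail_cons, Fin.isValue]
    linear_combination (-(η * s^2)) * pyth
  rw [hc]
  have h0' : ((0:ℝ)/2)^2/ε^2 = 0 := by norm_num
  rw [h0']
  have hD : Dv x y s η (thf t) 0 ^ 2 + Dv x y s η (thf t) 1 ^ 2 + 0 = s^2 := by
    simp only [Dv, Matrix.cons_val_zero, Matrix.cons_val_one, Matrix.head_cons,
      Fin.isValue]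
    linear_combination (s^2 * Real.sin (thf t)^2) * hη + s^2 * pyth
  rw [hD, Real.sqrt_sq hs]

lemma integral_taud : ∫ t in (0:ℝ)..(1/2), taud t = 1 := by
  have hd : ∀ t ∈ uIcc (0:ℝ) (1/2), HasDerivAt (fun u => -Real.cos (2*π*u)/2) (taud t) t := by
    intro t _
    have h1 : HasDerivAt (fun u : ℝ => 2*π*u) (2*π) t := by
      simpa using (hasDerivAt_id t).const_mul (2*π)
    have h2 := ((Real.hasDerivAt_cos (2*π*t)).comp t h1).neg.div_const 2
    have he : taud t = -(-Real.sin (2*π*t) * (2*π)) / 2 := by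
      unfold taud; ring
    rw [he]
    exact h2
  rw [intervalIntegral.integral_eq_sub_of_hasDerivAt hd
    (cont_taud.intervalIntegrable _ _)]
  rw [show 2*π*(1/2:ℝ) = π by ring, Real.cos_pi]
  norm_num

lemma integral_thd : ∫ t in (1/2:ℝ)..1, thd t = 2*π := by
  have hd : ∀ t ∈ uIcc (1/2:ℝ) 1, HasDerivAt thf (thd t) t :=
    fun t _ => hasDerivAt_thf t
  rw [intervalIntegral.integral_eq_sub_of_hasDerivAt hd
    (cont_thd.intervalIntegrable _ _), thf_one, thf_half]
  ring

lemma sqrt2_le (a b : ℝ) : Real.sqrt (a^2 + b^2) ≤ |a| + |b| := by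
  have h := sqrt3_le a b 0
  simpa using h

lemma dE_le_loop {ε : ℝ} (hε : 0 < ε) (x y : Pt) :
    dE ε x y ≤ |y 0 - x 0| + |y 1 - x 1| + Real.sqrt (2 * π * |wc x y|) := by
  classical
  have hπ := Real.pi_pos
  set w := wc x y with hwdef
  set s : ℝ := Real.sqrt (|w| / (2*π)) with hsdef
  set η : ℝ := if 0 ≤ w then (1:ℝ) else -1 with hηdef
  have hs0 : 0 ≤ s := Real.sqrt_nonneg _
  have hs2 : s^2 = |w|/(2*π) := Real.sq_sqrt (by positivity)
  have hη2 : η^2 = 1 := by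
    unfold η; split <;> norm_num
  have hηw : η * |w| = w := by
    unfold η
    rcases le_or_gt 0 w with h | h
    · rw [if_pos h, abs_of_nonneg h]; ring
    · rw [if_neg (not_le.mpr h), abs_of_neg h]; ring
  have hw : η * s^2 * (2*π) = wc x y := by
    rw [hs2, ← hwdef]
    field_simp
    linarith [hηw]
  -- membership of the glued curve
  set L : ℝ := ∫ t in (0:ℝ)..1, sigmaNorm ε (gam x y s η t) (gvel x y s η t) with hL
  have hmem : L ∈ CS ε x y := by
    refine ⟨gam x y s η, gvel x y s η, fun t _ => gam_hasDeriv x y s η t,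
      (cont_gvel x y s η).continuousOn, gam_zero x y s η, gam_one x y s η hw, rfl⟩
  -- compute the length
  set K : ℝ := Real.sqrt ((y 0 - x 0)^2 + (y 1 - x 1)^2) with hK
  have heq1 : EqOn (fun t => sigmaNorm ε (gam x y s η t) (gvel x y s η t))
      (fun t => K * taud t) (uIcc (0:ℝ) (1/2)) := by
    intro t ht
    rw [uIcc_of_le (by norm_num : (0:ℝ) ≤ 1/2)] at ht
    have h' : t ≤ 1/2 := ht.2
    simp only [gam, gvel, if_pos h']
    exact sn_P1 ε x y ht.1 ht.2
  have heq2 : EqOn (fun t => sigmaNorm ε (gam x y s η t) (gvel x y s η t))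
      (fun t => s * thd t) (uIcc (1/2:ℝ) 1) := by
    intro t ht
    rw [uIcc_of_le (by norm_num : (1/2:ℝ) ≤ 1)] at ht
    rcases eq_or_lt_of_le ht.1 with h | h
    · have h2 : t ≤ 1/2 := le_of_eq h.symm
      simp only [gam, gvel, if_pos h2, ← h]
      rw [gc1_half, thd_half]
      simp [sigmaNorm]
    · have h2 : ¬ t ≤ 1/2 := not_le.mpr h
      simp only [gam, gvel, if_neg h2]
      exact sn_P2 ε x y hs0 hη2 ht.1 ht.2
  have hint1 : IntervalIntegrable
      (fun t => sigmaNorm ε (gam x y s η t) (gvel x y s η t)) volume 0 (1/2) := by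
    apply ContinuousOn.intervalIntegrable
    exact ((continuous_const.mul cont_taud).continuousOn).congr heq1
  have hint2 : IntervalIntegrable
      (fun t => sigmaNorm ε (gam x y s η t) (gvel x y s η t)) volume (1/2) 1 := by
    apply ContinuousOn.intervalIntegrable
    exact ((continuous_const.mul cont_thd).continuousOn).congr heq2
  have hsplit : L = (∫ t in (0:ℝ)..(1/2), sigmaNorm ε (gam x y s η t) (gvel x y s η t))
      + ∫ t in (1/2:ℝ)..1, sigmaNorm ε (gam x y s η t) (gvel x y s η t) := by
    rw [hL, intervalIntegral.integral_add_adjacent_intervals hint1 hint2]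
  have hI1 : (∫ t in (0:ℝ)..(1/2), sigmaNorm ε (gam x y s η t) (gvel x y s η t)) = K := by
    rw [intervalIntegral.integral_congr heq1, intervalIntegral.integral_const_mul,
      integral_taud, mul_one]
  have hI2 : (∫ t in (1/2:ℝ)..1, sigmaNorm ε (gam x y s η t) (gvel x y s η t))
      = s * (2*π) := by
    rw [intervalIntegral.integral_congr heq2, intervalIntegral.integral_const_mul,
      integral_thd]
  have hLval : L = K + s * (2*π) := by rw [hsplit, hI1, hI2]
  have hdE : dE ε x y ≤ L := csInf_le (CS_bddBelow ε x y) hmem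
  have hKle : K ≤ |y 0 - x 0| + |y 1 - x 1| := sqrt2_le _ _
  have hsval : s * (2*π) = Real.sqrt (2 * π * |w|) := by
    rw [hsdef]
    rw [show 2 * π * |w| = (2*π)^2 * (|w| / (2*π)) by field_simp]
    rw [Real.sqrt_mul (by positivity), Real.sqrt_sq (by positivity)]
    ring
  rw [hwdef] at hsval
  linarith [hdE, hLval.le, hKle, hsval.le, hsval.ge]

end Loop


section Boxes

lemma ball_subset {ε : ℝ} (hε : 0 < ε) (x : Pt) {ρ : ℝ} :
    ballE ε x ρ ⊆ {y : Pt | |y 0 - x 0| ≤ ρ ∧ |y 1 - x 1| ≤ ρ ∧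
      |wc x y| ≤ 2*ε*ρ + 2*ρ^2} := by
  intro y hy
  have hlt : dE ε x y < ρ := hy
  rw [dE_eq] at hlt
  obtain ⟨L, hLmem, hLlt⟩ := (csInf_lt_iff (CS_bddBelow ε x y)
    (CS_nonempty ε x y)).mp hlt
  have hL0 : 0 ≤ L := CS_nonneg hLmem
  obtain ⟨h0, h1, h2⟩ := curve_bounds hε hLmem
  refine ⟨h0.trans hLlt.le, h1.trans hLlt.le, ?_⟩
  have hq : 2*ε*L + 2*L^2 ≤ 2*ε*ρ + 2*ρ^2 := by nlinarith [hε.le]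
  linarith

lemma box_subset {ε : ℝ} (hε : 0 < ε) (x : Pt) {r : ℝ} (hr : 0 < r) :
    {y : Pt | |y 0 - x 0| ≤ r/4 ∧ |y 1 - x 1| ≤ r/4 ∧
      |wc x y| ≤ max (ε*r/4) (r^2/(32*π))} ⊆ ballE ε x r := by
  have hπ := Real.pi_pos
  intro y hy
  obtain ⟨h0, h1, h2⟩ := hy
  rcases max_choice (ε*r/4) (r^2/(32*π)) with hmax | hmax
  · -- straight line suffices
    rw [hmax] at h2
    have hd := dE_le_straight hε x y
    have hq : |wc x y| / (2*ε) ≤ r/8 := by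
      rw [div_le_iff₀ (by linarith)]
      calc |wc x y| ≤ ε*r/4 := h2
        _ = r/8 * (2*ε) := by ring
    show dE ε x y < r
    linarith
  · -- circle arc suffices
    rw [hmax] at h2
    have hd := dE_le_loop hε x y
    have hq : Real.sqrt (2 * π * |wc x y|) ≤ r/4 := by
      rw [show r/4 = Real.sqrt ((r/4)^2) from (Real.sqrt_sq (by positivity)).symm]
      apply Real.sqrt_le_sqrt
      calc 2 * π * |wc x y| ≤ 2 * π * (r^2/(32*π)) := by
            apply mul_le_mul_of_nonneg_left h2 (by positivity)
        _ = (r/4)^2 := by field_simp; ring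
    show dE ε x y < r
    linarith

lemma volume_box (x : Pt) {A C : ℝ} (hA : 0 ≤ A) (hC : 0 ≤ C) :
    volume {y : Pt | |y 0 - x 0| ≤ A ∧ |y 1 - x 1| ≤ A ∧ |wc x y| ≤ C}
      = ENNReal.ofReal (2*A) * ENNReal.ofReal (2*A) * ENNReal.ofReal (2*C) := by
  classical
  set M : Matrix (Fin 3) (Fin 3) ℝ := !![1,0,0; 0,1,0; x 1, -(x 0), 1] with hM
  set f : Pt →ₗ[ℝ] Pt := Matrix.toLin' M with hf
  have hfy : ∀ y : Pt, f y = ![y 0, y 1, x 1 * y 0 - x 0 * y 1 + y 2] := by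
    intro y
    funext i
    fin_cases i <;>
      simp [hf, hM, Matrix.toLin'_apply, Matrix.mulVec, dotProduct,
        Fin.sum_univ_three] <;> ring
  have hdet : LinearMap.det f = 1 := by
    rw [hf, LinearMap.det_toLin', hM, Matrix.det_fin_three]
    simp
  set cvec : Pt := ![-(x 0), -(x 1), -(x 2)] with hcvec
  set av : Fin 3 → ℝ := ![A, A, C] with hav
  set K : Set Pt := univ.pi (fun i => Icc (-(av i)) (av i)) with hK
  have hset : {y : Pt | |y 0 - x 0| ≤ A ∧ |y 1 - x 1| ≤ A ∧ |wc x y| ≤ C}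
      = ⇑f ⁻¹' ((fun z => cvec + z) ⁻¹' K) := by
    ext y
    simp only [mem_setOf_eq, mem_preimage, hK, mem_pi, mem_univ, true_implies,
      mem_Icc, hfy y]
    constructor
    · rintro ⟨h0, h1, h2⟩ i
      fin_cases i
      · have := abs_le.mp h0
        constructor <;> · simp [hcvec, hav]; linarith [this.1, this.2]
      · have := abs_le.mp h1
        constructor <;> · simp [hcvec, hav]; linarith [this.1, this.2]
      · have := abs_le.mp h2
        unfold wc at this
        constructor <;> · simp [hcvec, hav]; linarith [this.1, this.2]
    · intro h
      have h0 := h 0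
      have h1 := h 1
      have h2 := h 2
      simp only [hcvec, hav] at h0 h1 h2
      simp only [Matrix.cons_val_zero, Matrix.cons_val_one, Matrix.head_cons,
        Matrix.cons_val_two, Matrix.tail_cons, Pi.add_apply] at h0 h1 h2
      refine ⟨abs_le.mpr ⟨by linarith [h0.1], by linarith [h0.2]⟩,
        abs_le.mpr ⟨by linarith [h1.1], by linarith [h1.2]⟩, ?_⟩
      unfold wc
      refine abs_le.mpr ⟨by linarith [h2.1], by linarith [h2.2]⟩
  rw [hset]
  rw [show (⇑f ⁻¹' ((fun z => cvec + z) ⁻¹' K)) = ⇑f ⁻¹' ((fun z => cvec + z) ⁻¹' K)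
    from rfl]
  rw [Measure.addHaar_preimage_linearMap volume (by rw [hdet]; norm_num)]
  rw [measure_preimage_add]
  rw [hdet]
  have hKvol : volume K = ENNReal.ofReal (2*A) * ENNReal.ofReal (2*A)
      * ENNReal.ofReal (2*C) := by
    rw [hK, volume_pi_pi]
    rw [Fin.prod_univ_three]
    simp only [hav, Matrix.cons_val_zero, Matrix.cons_val_one, Matrix.head_cons,
      Matrix.cons_val_two, Matrix.tail_cons, Real.volume_Icc]
    rw [show A - -A = 2*A by ring, show C - -C = 2*C by ring]
  rw [hKvol]
  norm_num

end Boxes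

end H18
/-- Uniform doubling property of the collapsing Riemannian metrics on the
Heisenberg group: there are `C, R > 0`, independent of `ε ∈ (0,1]`, with
`vol(B_ε(x,2r)) ≤ C · vol(B_ε(x,r))` for all `x` and `0 < r < R`. -/
theorem statement_18 :
    ∃ C : ℝ, 0 < C ∧ ∃ R : ℝ, 0 < R ∧
      ∀ ε ∈ Ioc (0 : ℝ) 1, ∀ x : Pt, ∀ r ∈ Ioo (0 : ℝ) R,
        volume (ballE ε x (2 * r)) ≤ ENNReal.ofReal C * volume (ballE ε x r) := by
  classical
  refine ⟨200000, by norm_num, 1, one_pos, ?_⟩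
  rintro ε ⟨hε0, hε1⟩ x r ⟨hr0, hr1⟩
  have hπ := Real.pi_pos
  have hm1 : ε*r/4 ≤ max (ε*r/4) (r^2/(32*π)) := le_max_left _ _
  have hm2 : r^2/(32*π) ≤ max (ε*r/4) (r^2/(32*π)) := le_max_right _ _
  have hm0 : (0:ℝ) ≤ max (ε*r/4) (r^2/(32*π)) :=
    le_trans (by nlinarith [mul_pos hε0 hr0]) hm1
  -- upper bound for the big ball
  have hb1 := measure_mono (μ := (volume : Measure Pt)) (H18.ball_subset hε0 x (ρ := 2*r))
  rw [H18.volume_box x (show (0:ℝ) ≤ 2*r by linarith)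
    (show (0:ℝ) ≤ 2*ε*(2*r) + 2*(2*r)^2 by nlinarith [mul_pos hε0 hr0, sq_nonneg r])] at hb1
  rw [← ENNReal.ofReal_mul (show (0:ℝ) ≤ 2*(2*r) by linarith),
    ← ENNReal.ofReal_mul (show (0:ℝ) ≤ 2*(2*r) * (2*(2*r)) by nlinarith)] at hb1
  -- lower bound for the small ball
  have hb2 := measure_mono (μ := (volume : Measure Pt)) (H18.box_subset hε0 x hr0)
  rw [H18.volume_box x (show (0:ℝ) ≤ r/4 by linarith) hm0] at hb2
  rw [← ENNReal.ofReal_mul (show (0:ℝ) ≤ 2*(r/4) by linarith),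
    ← ENNReal.ofReal_mul (show (0:ℝ) ≤ 2*(r/4) * (2*(r/4)) by nlinarith)] at hb2
  have hr2 : r^2 ≤ 128 * max (ε*r/4) (r^2/(32*π)) := by
    have h32 : r^2 ≤ max (ε*r/4) (r^2/(32*π)) * (32*π) := (div_le_iff₀ (by positivity)).mp hm2
    nlinarith [Real.pi_le_four, hm0,
      mul_nonneg hm0 (by linarith [Real.pi_le_four] : (0:ℝ) ≤ 4 - π)]
  have e1 : (ε*r/4)*r^2 ≤ max (ε*r/4) (r^2/(32*π)) * r^2 :=
    mul_le_mul_of_nonneg_right hm1 (sq_nonneg r)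
  have e2 : r^2*r^2 ≤ (128 * max (ε*r/4) (r^2/(32*π))) * r^2 :=
    mul_le_mul_of_nonneg_right hr2 (sq_nonneg r)
  have hreal : (2*(2*r)) * (2*(2*r)) * (2*(2*ε*(2*r) + 2*(2*r)^2))
      ≤ 200000 * ((2*(r/4)) * (2*(r/4)) * (2 * max (ε*r/4) (r^2/(32*π)))) := by
    nlinarith [e1, e2, hm0, sq_nonneg r, hr0.le,
      mul_nonneg hm0 (sq_nonneg r)]
  calc volume (ballE ε x (2*r))
      ≤ ENNReal.ofReal ((2*(2*r)) * (2*(2*r)) * (2*(2*ε*(2*r) + 2*(2*r)^2))) := hb1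
    _ ≤ ENNReal.ofReal (200000 * ((2*(r/4)) * (2*(r/4)) * (2 * max (ε*r/4) (r^2/(32*π))))) :=
        ENNReal.ofReal_le_ofReal hreal
    _ = ENNReal.ofReal 200000
        * ENNReal.ofReal ((2*(r/4)) * (2*(r/4)) * (2 * max (ε*r/4) (r^2/(32*π)))) :=
        ENNReal.ofReal_mul (by norm_num)
    _ ≤ ENNReal.ofReal 200000 * volume (ballE ε x r) := mul_le_mul_right hb2 _

end
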